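/- If E ⊊ E′ are free faces of a simplicial complex Σ, both of dimension less than d, then if Σ with all faces containing E removed is d-collapsible, so is Σ with all faces containing E′ removed. -/

import Mathlib

namespace ChordalPaper

/-- A simplicial complex on vertex set `Fin n`: a family of finsets closed under subsets. -/
def IsComplex {n : ℕ} (Γ : Set (Finset (Fin n))) : Prop :=
  ∀ F ∈ Γ, ∀ F' ⊆ F, F' ∈ Γ

/-- The `d`-closure `Δ_d(Γ)`: all subsets of size `≤ d`, together with all subsets
all of whose `(d+1)`-element subsets are faces of `Γ`. -/
def dClosure {n : ℕ} (d : ℕ) (Γ : Set (Finset (Fin n))) : Set (Finset (Fin n)) :=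
  {F | F.card ≤ d ∨ ∀ G ⊆ F, G.card = d + 1 → G ∈ Γ}

/-- The pure `(d-1)`-skeleton `⟨[n]⟩^{[d-1]}` of the full simplex: all subsets of size `≤ d`. -/
def fullSkel (n d : ℕ) : Set (Finset (Fin n)) := {F | F.card ≤ d}

/-- A facet: a maximal face. -/
def IsFacet {n : ℕ} (Γ : Set (Finset (Fin n))) (F : Finset (Fin n)) : Prop :=
  F ∈ Γ ∧ ∀ G ∈ Γ, F ⊆ G → G = F

/-- A free face: a face contained in a unique facet. -/
def IsFreeFace {n : ℕ} (Γ : Set (Finset (Fin n))) (E : Finset (Fin n)) : Prop :=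
  E ∈ Γ ∧ ∃! F, IsFacet Γ F ∧ E ⊆ F

/-- Collapse at `E`: remove all faces containing `E` (including `E` itself). -/
def collapseFace {n : ℕ} (Γ : Set (Finset (Fin n))) (E : Finset (Fin n)) :
    Set (Finset (Fin n)) := {F ∈ Γ | ¬ E ⊆ F}

/-- Successive collapses along a list of faces. -/
def collapseList {n : ℕ} (Γ : Set (Finset (Fin n))) :
    List (Finset (Fin n)) → Set (Finset (Fin n))
  | [] => Γ
  | E :: L => collapseList (collapseFace Γ E) L

/-- A free sequence: each face is free in the complex obtained by collapsing the previous ones. -/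
def IsFreeSeq {n : ℕ} (Γ : Set (Finset (Fin n))) : List (Finset (Fin n)) → Prop
  | [] => True
  | E :: L => IsFreeFace Γ E ∧ IsFreeSeq (collapseFace Γ E) L

/-- `d`-collapsibility: a sequence of elementary `d`-collapsings (at free faces of
dimension `< d`, i.e. cardinality `≤ d`) reduces `Γ` to the void complex. -/
def Collapsible {n : ℕ} (d : ℕ) (Γ : Set (Finset (Fin n))) : Prop :=
  ∃ L : List (Finset (Fin n)),
    IsFreeSeq Γ L ∧ (∀ E ∈ L, E.card ≤ d) ∧ collapseList Γ L = ∅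

/-- Simplicial deletion `Γ∖E`: remove all faces strictly containing `E` (keeping `E`). -/
def srDel {n : ℕ} (Γ : Set (Finset (Fin n))) (E : Finset (Fin n)) :
    Set (Finset (Fin n)) := {F ∈ Γ | ¬ E ⊂ F}

/-- Successive simplicial deletions along a list of faces. -/
def srDelList {n : ℕ} (Γ : Set (Finset (Fin n))) :
    List (Finset (Fin n)) → Set (Finset (Fin n))
  | [] => Γ
  | E :: L => srDelList (srDel Γ E) L

/-- A simplicial order for a `d`-closure on `Fin n`: a sequence of non-facet free faces of
cardinality `d` whose successive simplicial deletions reduce the complex to the pure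
`(d-1)`-skeleton of the full simplex. -/
def IsSimpOrder {n : ℕ} (d : ℕ) (Γ : Set (Finset (Fin n))) :
    List (Finset (Fin n)) → Prop
  | [] => Γ = fullSkel n d
  | E :: L => E.card = d ∧ IsFreeFace Γ E ∧ ¬ IsFacet Γ E ∧ IsSimpOrder d (srDel Γ E) L

/-- `Γ` is `d`-chordal: its `d`-closure equals the pure `(d-1)`-skeleton of the full
simplex or admits a simplicial order. -/
def DChordal {n : ℕ} (d : ℕ) (Γ : Set (Finset (Fin n))) : Prop :=
  ∃ L, IsSimpOrder d (dClosure d Γ) L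

/-- A minimal nonface of `Γ`. -/
def IsMinNonface {n : ℕ} (Γ : Set (Finset (Fin n))) (F : Finset (Fin n)) : Prop :=
  F ∉ Γ ∧ ∀ G ⊂ F, G ∈ Γ

end ChordalPaper

open ChordalPaper

/-- Every face is contained in some facet. -/
lemma exists_facet {n : ℕ} (S : Set (Finset (Fin n))) {G : Finset (Fin n)} (hG : G ∈ S) :
    ∃ F, IsFacet S F ∧ G ⊆ F := by
  have hfin : ({H ∈ S | G ⊆ H} : Set (Finset (Fin n))).Finite := Set.toFinite _
  obtain ⟨F, hF, hmax⟩ := Set.Finite.exists_maximalFor Finset.card _ hfin ⟨G, hG, subset_rfl⟩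
  refine ⟨F, ⟨hF.1, fun H hH hFH => ?_⟩, hF.2⟩
  have hHm : H ∈ {H ∈ S | G ⊆ H} := ⟨hH, hF.2.trans hFH⟩
  have := le_antisymm (Finset.card_le_card hFH) (hmax hHm (Finset.card_le_card hFH))
  exact (Finset.eq_of_subset_of_card_le hFH this.ge).symm

/-- Collapsing at a smaller face after collapsing at a larger one. -/
lemma collapse_collapse {n : ℕ} (S : Set (Finset (Fin n))) {E E' : Finset (Fin n)}
    (hEE' : E ⊆ E') : collapseFace (collapseFace S E') E = collapseFace S E := by
  ext F
  simp only [collapseFace, Set.mem_setOf_eq]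
  constructor
  · rintro ⟨⟨h1, _⟩, h3⟩; exact ⟨h1, h3⟩
  · rintro ⟨h1, h2⟩; exact ⟨⟨h1, fun hc => h2 (hEE'.trans hc)⟩, h2⟩

/-- Single-element step. -/
lemma stmt2_step (n d : ℕ) (S : Set (Finset (Fin n))) (hS : IsComplex S)
    (E : Finset (Fin n)) (x : Fin n) (hx : x ∉ E)
    (hE : IsFreeFace S E) (hE' : IsFreeFace S (insert x E))
    (hdE : E.card ≤ d)
    (h : Collapsible d (collapseFace S E)) :
    Collapsible d (collapseFace S (insert x E)) := by
  obtain ⟨F, ⟨hFfacet, hE'F⟩, hFu⟩ := hE'.2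
  have hEF : E ⊆ F := (Finset.subset_insert x E).trans hE'F
  -- every face of S containing E is contained in F
  have key : ∀ G ∈ S, E ⊆ G → G ⊆ F := by
    intro G hG hEG
    obtain ⟨H, hHfacet, hGH⟩ := exists_facet S hG
    obtain ⟨F0, hF0, hF0u⟩ := hE.2
    have h1 : H = F0 := hF0u H ⟨hHfacet, hEG.trans hGH⟩
    have h2 : F = F0 := hF0u F ⟨hFfacet, hEF⟩
    rw [h1, ← h2] at hGH
    exact hGH
  set T := collapseFace S (insert x E) with hT
  have hET : E ∈ T := ⟨hE.1, fun hc => hx (hc (Finset.mem_insert_self x E))⟩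
  have hxF : x ∈ F := hE'F (Finset.mem_insert_self x E)
  -- F.erase x is a facet of T containing E
  have hfacet : IsFacet T (F.erase x) := by
    constructor
    · exact ⟨hS F hFfacet.1 _ (Finset.erase_subset x F),
        fun hc => (Finset.notMem_erase x F) (hc (Finset.mem_insert_self x E))⟩
    · intro G hG hFG
      have hEG : E ⊆ G := (Finset.subset_erase.mpr ⟨hEF, hx⟩).trans hFG
      have hGF : G ⊆ F := key G hG.1 hEG
      have hxG : x ∉ G := fun hxG => hG.2 (Finset.insert_subset hxG hEG)
      exact Finset.Subset.antisymm (Finset.subset_erase.mpr ⟨hGF, hxG⟩) hFG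
  have hfree : IsFreeFace T E := by
    refine ⟨hET, F.erase x, ⟨hfacet, Finset.subset_erase.mpr ⟨hEF, hx⟩⟩, ?_⟩
    rintro G ⟨hGfacet, hEG⟩
    have hGF : G ⊆ F := key G hGfacet.1.1 hEG
    have hxG : x ∉ G := fun hxG => hGfacet.1.2 (Finset.insert_subset hxG hEG)
    exact (hGfacet.2 (F.erase x) hfacet.1 (Finset.subset_erase.mpr ⟨hGF, hxG⟩)).symm
  obtain ⟨L, hL1, hL2, hL3⟩ := h
  refine ⟨E :: L, ⟨hfree, ?_⟩, ?_, ?_⟩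
  · rw [hT, collapse_collapse S (Finset.subset_insert x E)]; exact hL1
  · intro G hG
    rcases List.mem_cons.mp hG with h1 | h1
    · exact h1 ▸ hdE
    · exact hL2 G h1
  · show collapseList (collapseFace T E) L = ∅
    rw [hT, collapse_collapse S (Finset.subset_insert x E)]
    exact hL3

open ChordalPaper in
/-- Tancer: if `E ⊊ E'` are free faces of `Σ` of dimension `< d` and
`Σ` collapsed at `E` is `d`-collapsible, then so is `Σ` collapsed at `E'`. -/
theorem stmt2 (n d : ℕ) (hd : 1 ≤ d) (S : Set (Finset (Fin n))) (hS : IsComplex S)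
    (E E' : Finset (Fin n)) (hEE' : E ⊂ E')
    (hE : IsFreeFace S E) (hE' : IsFreeFace S E')
    (hdE : E.card ≤ d) (hdE' : E'.card ≤ d)
    (h : Collapsible d (collapseFace S E)) :
    Collapsible d (collapseFace S E') := by
  clear hd
  have main : ∀ k (E : Finset (Fin n)), (E' \ E).card = k → E ⊂ E' →
      IsFreeFace S E → E.card ≤ d → Collapsible d (collapseFace S E) →
      Collapsible d (collapseFace S E') := by
    intro k
    induction k with
    | zero =>
      intro E hk hEE' _ _ _
      obtain ⟨x, hx⟩ := Finset.exists_of_ssubset hEE'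
      exact absurd (Finset.card_eq_zero.mp hk)
        (Finset.nonempty_iff_ne_empty.mp ⟨x, Finset.mem_sdiff.mpr ⟨hx.1, hx.2⟩⟩)
    | succ k ih =>
      intro E hk hEE' hE hdE h
      obtain ⟨x, hxE', hxE⟩ := Finset.exists_of_ssubset hEE'
      have hsub : insert x E ⊆ E' := Finset.insert_subset hxE' hEE'.subset
      -- insert x E is a free face of S
      have hfree : IsFreeFace S (insert x E) := by
        refine ⟨hS E' hE'.1 _ hsub, ?_⟩
        obtain ⟨F0, hF0, hF0u⟩ := hE.2
        obtain ⟨H, hH, hE''H⟩ := exists_facet S (hS E' hE'.1 _ hsub)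
        refine ⟨H, ⟨hH, hE''H⟩, ?_⟩
        rintro G ⟨hG, hEG⟩
        have h1 : G = F0 := hF0u G ⟨hG, (Finset.subset_insert x E).trans hEG⟩
        have h2 : H = F0 := hF0u H ⟨hH, (Finset.subset_insert x E).trans hE''H⟩
        rw [h1, h2]
      rcases eq_or_ne (insert x E) E' with heq | hne
      · rw [← heq]
        exact stmt2_step n d S hS E x hxE hE (heq ▸ hE') hdE h
      · have hcard : (E' \ insert x E).card = k := by
          rw [Finset.sdiff_insert, Finset.card_erase_of_mem
            (Finset.mem_sdiff.mpr ⟨hxE', hxE⟩), hk]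
          omega
        have hss : insert x E ⊂ E' := Finset.ssubset_iff_subset_ne.mpr ⟨hsub, hne⟩
        have hcard' : (insert x E).card ≤ d := (Finset.card_le_card hsub).trans hdE'
        exact ih (insert x E) hcard hss hfree hcard'
          (stmt2_step n d S hS E x hxE hE hfree hdE h)
  exact main (E' \ E).card E rfl hEE' hE hdE h
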